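/- For PSD matrices, if XX^T = Σ and YY^T = Λ with X, Y ∈ Mat(n), and R ∈ O(n) is chosen so that X^T Y = (X^T Λ X)^{1/2} R, then the squared Frobenius distance ‖YR^T − X‖² equals tr(Σ + Λ − 2(X^T Λ X)^{1/2}), which equals the squared Bures-Wasserstein distance between Σ and Λ. -/

import Mathlib

open Matrix

open Classical in
/-- The symmetric PSD square root of a PSD matrix (junk value `0` otherwise). -/
noncomputable def psdSqrt {n : ℕ} (A : Matrix (Fin n) (Fin n) ℝ) : Matrix (Fin n) (Fin n) ℝ :=
  if h : A.PosSemidef then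
    (h.1.eigenvectorUnitary : Matrix (Fin n) (Fin n) ℝ) *
      diagonal ((RCLike.ofReal : ℝ → ℝ) ∘ Real.sqrt ∘ h.1.eigenvalues) *
      (star h.1.eigenvectorUnitary : Matrix (Fin n) (Fin n) ℝ)
  else 0

/-- Frobenius (Euclidean) distance between matrices. -/
noncomputable def frobDist {m k : ℕ} (A B : Matrix (Fin m) (Fin k) ℝ) : ℝ :=
  Real.sqrt (((A - B)ᵀ * (A - B)).trace)


section Aux
open Polynomial
variable {n : ℕ}

noncomputable def Matrix.PosSemidef.sqrt {A : Matrix (Fin n) (Fin n) ℝ} (h : A.PosSemidef) :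
    Matrix (Fin n) (Fin n) ℝ :=
  (h.1.eigenvectorUnitary : Matrix (Fin n) (Fin n) ℝ) *
    diagonal ((RCLike.ofReal : ℝ → ℝ) ∘ Real.sqrt ∘ h.1.eigenvalues) *
    (star h.1.eigenvectorUnitary : Matrix (Fin n) (Fin n) ℝ)

lemma Matrix.PosSemidef.posSemidef_sqrt {A : Matrix (Fin n) (Fin n) ℝ} (hA : A.PosSemidef) :
    hA.sqrt.PosSemidef := by
  unfold Matrix.PosSemidef.sqrt
  rw [star_eq_conjTranspose]
  exact (posSemidef_diagonal_iff.mpr fun i => by simp [Real.sqrt_nonneg]).mul_mul_conjTranspose_same _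

lemma Matrix.PosSemidef.sqrt_mul_self {A : Matrix (Fin n) (Fin n) ℝ} (hA : A.PosSemidef) :
    hA.sqrt * hA.sqrt = A := by
  set U := (hA.1.eigenvectorUnitary : Matrix (Fin n) (Fin n) ℝ)
  have hU : U * star U = 1 := Matrix.mem_unitaryGroup_iff.mp hA.1.eigenvectorUnitary.2
  have h2 : star U * U = 1 := mul_eq_one_comm.mp hU
  set D := diagonal ((RCLike.ofReal : ℝ → ℝ) ∘ Real.sqrt ∘ hA.1.eigenvalues)
  show U * D * star U * (U * D * star U) = A
  rw [show U * D * star U * (U * D * star U) = U * (D * D) * star U by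
    calc U * D * star U * (U * D * star U) = U * D * (star U * U) * D * star U := by
          simp only [mul_assoc]
      _ = U * (D * D) * star U := by rw [h2]; simp only [mul_one, mul_assoc]]
  conv_rhs => rw [hA.1.spectral_theorem, Unitary.conjStarAlgAut_apply]
  rw [diagonal_mul_diagonal]
  congr 3
  funext i
  simp [Real.mul_self_sqrt (hA.eigenvalues_nonneg i)]

lemma mul_pow_mul_aux (A B : Matrix (Fin n) (Fin n) ℝ) (k : ℕ) :
    (A * B) ^ (k + 1) = A * (B * A) ^ k * B := by
  induction k with
  | zero => simp
  | succ k ih => rw [pow_succ, ih, pow_succ]; simp only [mul_assoc]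

lemma trace_pow_mul_comm (A B : Matrix (Fin n) (Fin n) ℝ) (k : ℕ) :
    ((A * B) ^ k).trace = ((B * A) ^ k).trace := by
  cases k with
  | zero => simp
  | succ k => rw [mul_pow_mul_aux, mul_assoc, trace_mul_comm, mul_assoc, ← pow_succ]

lemma trace_aeval_mul_comm (A B : Matrix (Fin n) (Fin n) ℝ) (p : ℝ[X]) :
    (aeval (A * B) p).trace = (aeval (B * A) p).trace := by
  rw [aeval_eq_sum_range, aeval_eq_sum_range, trace_sum, trace_sum]
  exact Finset.sum_congr rfl fun k _ => by
    rw [trace_smul, trace_smul, trace_pow_mul_comm]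

lemma conj_pow_lemma (U D : Matrix (Fin n) (Fin n) ℝ) (hU : U * star U = 1) (k : ℕ) :
    (U * D * star U) ^ k = U * D ^ k * star U := by
  induction k with
  | zero => simpa using hU.symm
  | succ k ih =>
      rw [pow_succ, ih, pow_succ]
      have h2 : star U * U = 1 := mul_eq_one_comm.mp hU
      calc U * D ^ k * star U * (U * D * star U)
          = U * D ^ k * (star U * U) * D * star U := by simp only [mul_assoc]
        _ = U * (D ^ k * D) * star U := by rw [h2]; simp only [mul_one, mul_assoc]

lemma trace_pow_eq (A : Matrix (Fin n) (Fin n) ℝ) (hA : A.IsHermitian) (k : ℕ) :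
    (A ^ k).trace = ∑ i, hA.eigenvalues i ^ k := by
  set U := (hA.eigenvectorUnitary : Matrix (Fin n) (Fin n) ℝ)
  have hU : U * star U = 1 := Matrix.mem_unitaryGroup_iff.mp hA.eigenvectorUnitary.2
  have h2 : star U * U = 1 := mul_eq_one_comm.mp hU
  conv_lhs => rw [hA.spectral_theorem, Unitary.conjStarAlgAut_apply, conj_pow_lemma _ _ hU]
  rw [trace_mul_comm, ← mul_assoc, h2, one_mul, diagonal_pow, trace_diagonal]
  simp [RCLike.ofReal]

lemma trace_aeval (A : Matrix (Fin n) (Fin n) ℝ) (hA : A.IsHermitian) (p : ℝ[X]) :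
    (aeval A p).trace = ∑ i, p.eval (hA.eigenvalues i) := by
  rw [aeval_eq_sum_range, trace_sum]
  simp_rw [trace_smul, trace_pow_eq A hA, smul_eq_mul, Finset.mul_sum]
  rw [Finset.sum_comm]
  refine Finset.sum_congr rfl fun i _ => ?_
  rw [eval_eq_sum_range]

lemma trace_sqrt_eq (A : Matrix (Fin n) (Fin n) ℝ) (hA : A.PosSemidef) :
    hA.sqrt.trace = ∑ i, Real.sqrt (hA.1.eigenvalues i) := by
  rw [Matrix.PosSemidef.sqrt]
  set U := (hA.1.eigenvectorUnitary : Matrix (Fin n) (Fin n) ℝ)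
  have hU : U * star U = 1 := Matrix.mem_unitaryGroup_iff.mp hA.1.eigenvectorUnitary.2
  have h2 : star U * U = 1 := mul_eq_one_comm.mp hU
  rw [trace_mul_comm, ← mul_assoc, h2, one_mul, trace_diagonal]
  simp [RCLike.ofReal]

lemma trace_sqrt_mul_comm (A B : Matrix (Fin n) (Fin n) ℝ)
    (h1 : (A * B).PosSemidef) (h2 : (B * A).PosSemidef) :
    h1.sqrt.trace = h2.sqrt.trace := by
  classical
  set s : Finset ℝ :=
    (Finset.univ.image h1.1.eigenvalues) ∪ (Finset.univ.image h2.1.eigenvalues) with hs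
  set p : ℝ[X] := Lagrange.interpolate s id Real.sqrt with hp
  have hinj : Set.InjOn (id : ℝ → ℝ) s := Function.injective_id.injOn
  have hev : ∀ x ∈ s, p.eval x = Real.sqrt x := fun x hx => by
    exact Lagrange.eval_interpolate_at_node Real.sqrt hinj hx
  have e1 : ∀ i, p.eval (h1.1.eigenvalues i) = Real.sqrt (h1.1.eigenvalues i) := fun i =>
    hev _ (Finset.mem_union_left _ (Finset.mem_image_of_mem _ (Finset.mem_univ i)))
  have e2 : ∀ i, p.eval (h2.1.eigenvalues i) = Real.sqrt (h2.1.eigenvalues i) := fun i =>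
    hev _ (Finset.mem_union_right _ (Finset.mem_image_of_mem _ (Finset.mem_univ i)))
  rw [trace_sqrt_eq _ h1, trace_sqrt_eq _ h2]
  calc ∑ i, Real.sqrt (h1.1.eigenvalues i) = ∑ i, p.eval (h1.1.eigenvalues i) := by
        simp_rw [e1]
    _ = (aeval (A * B) p).trace := (trace_aeval _ h1.1 p).symm
    _ = (aeval (B * A) p).trace := trace_aeval_mul_comm A B p
    _ = ∑ i, p.eval (h2.1.eigenvalues i) := trace_aeval _ h2.1 p
    _ = ∑ i, Real.sqrt (h2.1.eigenvalues i) := by simp_rw [e2]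

lemma psd_mul_transpose (B : Matrix (Fin n) (Fin n) ℝ) : (Bᵀ * B).PosSemidef := by
  simpa [conjTranspose_eq_transpose_of_trivial] using posSemidef_conjTranspose_mul_self B


lemma sqrt_congr_trace {A B : Matrix (Fin n) (Fin n) ℝ} (h : A = B)
    (hA : A.PosSemidef) (hB : B.PosSemidef) : hA.sqrt.trace = hB.sqrt.trace := by
  subst h; rfl

end Aux

theorem squared_frobDist_eq_squared_buresWasserstein (n : ℕ)
    (X Y R : Matrix (Fin n) (Fin n) ℝ) (hR : Rᵀ * R = 1)
    (hXY : Xᵀ * Y = psdSqrt (Xᵀ * (Y * Yᵀ) * X) * R) :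
    frobDist (Y * Rᵀ) X ^ 2
        = (X * Xᵀ + Y * Yᵀ - 2 • psdSqrt (Xᵀ * (Y * Yᵀ) * X)).trace ∧
    frobDist (Y * Rᵀ) X ^ 2
        = (X * Xᵀ + Y * Yᵀ
            - 2 • psdSqrt (psdSqrt (X * Xᵀ) * (Y * Yᵀ) * psdSqrt (X * Xᵀ))).trace := by
  have hRR : R * Rᵀ = 1 := mul_eq_one_comm.mp hR
  -- PSD facts
  have hM : (Xᵀ * (Y * Yᵀ) * X).PosSemidef := by
    have h := psd_mul_transpose (Yᵀ * X)
    simpa [Matrix.transpose_mul, Matrix.mul_assoc] using h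
  have hSig : (X * Xᵀ).PosSemidef := by
    have h := psd_mul_transpose Xᵀ
    simpa using h
  have eSig : psdSqrt (X * Xᵀ) = hSig.sqrt := dif_pos hSig
  have eM : psdSqrt (Xᵀ * (Y * Yᵀ) * X) = hM.sqrt := dif_pos hM
  have hσsym : hSig.sqrtᵀ = hSig.sqrt := by
    rw [← conjTranspose_eq_transpose_of_trivial]
    exact hSig.posSemidef_sqrt.1
  have hM2 : (hSig.sqrt * (Y * Yᵀ) * hSig.sqrt).PosSemidef := by
    have h := psd_mul_transpose (Yᵀ * hSig.sqrt)
    simpa [Matrix.transpose_mul, hσsym, Matrix.mul_assoc] using h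
  have eM2 : psdSqrt (hSig.sqrt * (Y * Yᵀ) * hSig.sqrt) = hM2.sqrt := dif_pos hM2
  rw [eM] at hXY
  rw [eSig, eM]
  -- squared frobDist
  have hnn : (0:ℝ) ≤ (((Y * Rᵀ) - X)ᵀ * ((Y * Rᵀ) - X)).trace := by
    rw [Matrix.trace]
    refine Finset.sum_nonneg fun j _ => ?_
    simp only [Matrix.diag_apply, Matrix.mul_apply, Matrix.transpose_apply]
    exact Finset.sum_nonneg fun i _ => mul_self_nonneg _
  have hfd : frobDist (Y * Rᵀ) X ^ 2 = (((Y * Rᵀ) - X)ᵀ * ((Y * Rᵀ) - X)).trace := by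
    rw [frobDist, Real.sq_sqrt hnn]
  -- expansion
  have expand : ((Y * Rᵀ) - X)ᵀ * ((Y * Rᵀ) - X)
      = R * Yᵀ * (Y * Rᵀ) - R * Yᵀ * X - Xᵀ * (Y * Rᵀ) + Xᵀ * X := by
    simp only [Matrix.transpose_sub, Matrix.transpose_mul, Matrix.transpose_transpose,
      Matrix.sub_mul, Matrix.mul_sub]
    abel
  have t1 : (R * Yᵀ * (Y * Rᵀ)).trace = (Y * Yᵀ).trace := by
    rw [show R * Yᵀ * (Y * Rᵀ) = R * (Yᵀ * Y) * Rᵀ by simp only [Matrix.mul_assoc],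
      trace_mul_comm, ← Matrix.mul_assoc, hR, Matrix.one_mul, trace_mul_comm]
  have t2 : (Xᵀ * (Y * Rᵀ)).trace = hM.sqrt.trace := by
    rw [← Matrix.mul_assoc, hXY, Matrix.mul_assoc, hRR, Matrix.mul_one]
  have t3 : (R * Yᵀ * X).trace = hM.sqrt.trace := by
    have : R * Yᵀ * X = (Xᵀ * (Y * Rᵀ))ᵀ := by
      simp [Matrix.transpose_mul, Matrix.mul_assoc]
    rw [this, trace_transpose, t2]
  have t4 : (Xᵀ * X).trace = (X * Xᵀ).trace := trace_mul_comm _ _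
  have part1 : frobDist (Y * Rᵀ) X ^ 2
      = (X * Xᵀ + Y * Yᵀ - 2 • hM.sqrt).trace := by
    rw [hfd, expand, trace_add, trace_sub, trace_sub, t1, t2, t3, t4,
      trace_sub, trace_add, trace_smul]
    ring
  refine ⟨part1, ?_⟩
  -- trace of the two sqrt's agree
  have key : hM.sqrt.trace = hM2.sqrt.trace := by
    have hA1 : ((Xᵀ * Y) * (Yᵀ * X)).PosSemidef := by
      rwa [show (Xᵀ * Y) * (Yᵀ * X) = Xᵀ * (Y * Yᵀ) * X by
        simp only [Matrix.mul_assoc]]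
    have hB1 : ((Yᵀ * X) * (Xᵀ * Y)).PosSemidef := by
      have h := psd_mul_transpose (Xᵀ * Y)
      simpa [Matrix.transpose_mul, Matrix.mul_assoc] using h
    have hA2 : ((hSig.sqrt * Y) * (Yᵀ * hSig.sqrt)).PosSemidef := by
      rwa [show (hSig.sqrt * Y) * (Yᵀ * hSig.sqrt) = hSig.sqrt * (Y * Yᵀ) * hSig.sqrt by
        simp only [Matrix.mul_assoc]]
    have hB2 : ((Yᵀ * hSig.sqrt) * (hSig.sqrt * Y)).PosSemidef := by
      have h := psd_mul_transpose (hSig.sqrtᵀ * Y)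
      simpa [Matrix.transpose_mul, hσsym, Matrix.mul_assoc] using h
    have hBB : (Yᵀ * X) * (Xᵀ * Y) = (Yᵀ * hSig.sqrt) * (hSig.sqrt * Y) := by
      have := hSig.sqrt_mul_self
      calc (Yᵀ * X) * (Xᵀ * Y) = Yᵀ * (X * Xᵀ) * Y := by simp only [Matrix.mul_assoc]
        _ = Yᵀ * (hSig.sqrt * hSig.sqrt) * Y := by rw [this]
        _ = (Yᵀ * hSig.sqrt) * (hSig.sqrt * Y) := by simp only [Matrix.mul_assoc]
    calc hM.sqrt.trace
        = hA1.sqrt.trace := sqrt_congr_trace (by simp only [Matrix.mul_assoc]) _ _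
      _ = hB1.sqrt.trace := trace_sqrt_mul_comm _ _ hA1 hB1
      _ = hB2.sqrt.trace := sqrt_congr_trace hBB _ _
      _ = hA2.sqrt.trace := trace_sqrt_mul_comm _ _ hB2 hA2
      _ = hM2.sqrt.trace := sqrt_congr_trace (by simp only [Matrix.mul_assoc]) _ _
  rw [part1, eM2, trace_sub, trace_sub, trace_smul, trace_smul, key]
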